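/- arXiv:2507.07609 — 4 statements merged into one kernel-verified Lean document; each statement's English description precedes it below -/
import Mathlib

section
/- Let f̄ = y₁^(k+1) + y₂ + y₂y₃² ∈ ℂ[y₁,y₂,y₃] with k ≥ 1. Then Jac(f̄) is a 2k-dimensional ℂ-vector space with basis given by the classes of 1, y₁, …, y₁^(k-1), y₃, y₁y₃, …, y₁^(k-1)y₃. -/
open MvPolynomial

noncomputable section

namespace Stmt1Aux
open Polynomial

abbrev R (k : ℕ) : Type := AdjoinRoot ((Polynomial.X : Polynomial ℂ) ^ k)
abbrev A (k : ℕ) : Type := AdjoinRoot ((Polynomial.X : Polynomial (R k)) ^ 2 + 1)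

lemma monic1 (k : ℕ) : ((Polynomial.X : Polynomial ℂ) ^ k).Monic := monic_X.pow _

lemma nontrivR (k : ℕ) (hk : 1 ≤ k) : Nontrivial (R k) := by
  refine AdjoinRoot.nontrivial _ ?_
  rw [Polynomial.degree_X_pow]
  exact_mod_cast (by omega : k ≠ 0)

lemma monic2 (k : ℕ) : ((Polynomial.X : Polynomial (R k)) ^ 2 + 1).Monic := by
  have : ((Polynomial.X : Polynomial (R k)) ^ 2 + 1)
      = (Polynomial.X : Polynomial (R k)) ^ 2 + Polynomial.C 1 := by simp
  rw [this]
  exact Polynomial.monic_X_pow_add_C _ (by norm_num)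

lemma natDeg2 (k : ℕ) (hk : 1 ≤ k) :
    ((Polynomial.X : Polynomial (R k)) ^ 2 + 1).natDegree = 2 := by
  haveI := nontrivR k hk
  have : ((Polynomial.X : Polynomial (R k)) ^ 2 + 1)
      = (Polynomial.X : Polynomial (R k)) ^ 2 + Polynomial.C 1 := by simp
  rw [this, Polynomial.natDegree_X_pow_add_C]

lemma natDeg1 (k : ℕ) : ((Polynomial.X : Polynomial ℂ) ^ k).natDegree = k := by
  simp

end Stmt1Aux
namespace Stmt1Aux

/-- the evaluation hom -/
def φ (k : ℕ) : MvPolynomial (Fin 3) ℂ →ₐ[ℂ] A k :=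
  MvPolynomial.aeval ![algebraMap (R k) (A k) (AdjoinRoot.root _), 0, AdjoinRoot.root _]

lemma φ_X0 (k : ℕ) : φ k (X 0) = algebraMap (R k) (A k) (AdjoinRoot.root _) := by
  simp [φ]
lemma φ_X1 (k : ℕ) : φ k (X 1) = 0 := by simp [φ]
lemma φ_X2 (k : ℕ) : φ k (X 2) = AdjoinRoot.root _ := by simp [φ]

lemma rootR_pow (k : ℕ) : (AdjoinRoot.root ((Polynomial.X : Polynomial ℂ) ^ k)) ^ k = 0 := by
  have := AdjoinRoot.eval₂_root ((Polynomial.X : Polynomial ℂ) ^ k)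
  simpa using this

lemma rootA_sq (k : ℕ) :
    (AdjoinRoot.root ((Polynomial.X : Polynomial (R k)) ^ 2 + 1)) ^ 2 + 1 = 0 := by
  have := AdjoinRoot.eval₂_root ((Polynomial.X : Polynomial (R k)) ^ 2 + 1)
  simpa using this

lemma φ_X0pk (k : ℕ) : φ k (X 0 ^ k) = 0 := by
  rw [map_pow, φ_X0, ← map_pow, rootR_pow, map_zero]
lemma φ_gen1 (k : ℕ) : φ k (MvPolynomial.C ((k : ℂ) + 1) * X 0 ^ k) = 0 := by
  rw [map_mul, φ_X0pk, mul_zero]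
lemma φ_gen2 (k : ℕ) : φ k (1 + X 2 ^ 2) = 0 := by
  have := rootA_sq k
  simp only [map_add, map_one, map_pow, φ_X2]
  linear_combination this
lemma φ_gen3 (k : ℕ) : φ k ((2 : MvPolynomial (Fin 3) ℂ) * (X 1 * X 2)) = 0 := by
  simp [φ_X1]

end Stmt1Aux
namespace Stmt1Aux

variable (k : ℕ) (J : Ideal (MvPolynomial (Fin 3) ℂ))

/-- quotient ring -/
abbrev Q (J : Ideal (MvPolynomial (Fin 3) ℂ)) := MvPolynomial (Fin 3) ℂ ⧸ J

def ψ (hφJ : ∀ a ∈ J, φ k a = 0) : Q J →ₐ[ℂ] A k :=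
  Ideal.Quotient.liftₐ J (φ k) hφJ

lemma ψ_mk (hφJ : ∀ a ∈ J, φ k a = 0) (p : MvPolynomial (Fin 3) ℂ) :
    ψ k J hφJ (Ideal.Quotient.mk J p) = φ k p := by
  simp [ψ, Ideal.Quotient.liftₐ_apply]
  exact Ideal.Quotient.lift_mk J _ _

def χ0 (h0 : X 0 ^ k ∈ J) : R k →+* Q J :=
  AdjoinRoot.lift (algebraMap ℂ (Q J)) (Ideal.Quotient.mk J (X 0)) (by
    rw [Polynomial.eval₂_pow, Polynomial.eval₂_X, ← map_pow,
      Ideal.Quotient.eq_zero_iff_mem]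
    exact h0)

lemma χ0_root (h0 : X 0 ^ k ∈ J) :
    χ0 k J h0 (AdjoinRoot.root _) = Ideal.Quotient.mk J (X 0) := AdjoinRoot.lift_root _
lemma χ0_of (h0 : X 0 ^ k ∈ J) (c : ℂ) :
    χ0 k J h0 (AdjoinRoot.of _ c) = algebraMap ℂ (Q J) c := AdjoinRoot.lift_of _

def χ (h0 : X 0 ^ k ∈ J) (h2 : 1 + X 2 ^ 2 ∈ J) : A k →+* Q J :=
  AdjoinRoot.lift (χ0 k J h0) (Ideal.Quotient.mk J (X 2)) (by
    rw [Polynomial.eval₂_add, Polynomial.eval₂_pow, Polynomial.eval₂_X,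
      Polynomial.eval₂_one, ← map_pow, ← map_one (Ideal.Quotient.mk J), ← map_add,
      Ideal.Quotient.eq_zero_iff_mem]
    exact (by rwa [add_comm] : X 2 ^ 2 + 1 ∈ J))

lemma χ_root (h0 : X 0 ^ k ∈ J) (h2 : 1 + X 2 ^ 2 ∈ J) :
    χ k J h0 h2 (AdjoinRoot.root _) = Ideal.Quotient.mk J (X 2) := AdjoinRoot.lift_root _
lemma χ_of (h0 : X 0 ^ k ∈ J) (h2 : 1 + X 2 ^ 2 ∈ J) (r : R k) :
    χ k J h0 h2 (AdjoinRoot.of _ r) = χ0 k J h0 r := AdjoinRoot.lift_of _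

end Stmt1Aux
namespace Stmt1Aux
open Polynomial

variable (k : ℕ) (J : Ideal (MvPolynomial (Fin 3) ℂ))
  (hφJ : ∀ a ∈ J, φ k a = 0) (h0 : X 0 ^ k ∈ J) (h2 : 1 + X 2 ^ 2 ∈ J)

lemma mk_monomial (g : Polynomial (R k)) (n : ℕ) (c : R k) :
    AdjoinRoot.mk g (Polynomial.monomial n c)
      = algebraMap (R k) (AdjoinRoot g) c * (AdjoinRoot.root g) ^ n := by
  rw [← Polynomial.C_mul_X_pow_eq_monomial, map_mul, map_pow, AdjoinRoot.mk_X,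
    AdjoinRoot.mk_C, AdjoinRoot.algebraMap_eq]

lemma mk_monomial' (g : Polynomial ℂ) (n : ℕ) (c : ℂ) :
    AdjoinRoot.mk g (Polynomial.monomial n c)
      = algebraMap ℂ (AdjoinRoot g) c * (AdjoinRoot.root g) ^ n := by
  rw [← Polynomial.C_mul_X_pow_eq_monomial, map_mul, map_pow, AdjoinRoot.mk_X,
    AdjoinRoot.mk_C, AdjoinRoot.algebraMap_eq]

lemma χ_comp_ψ (hX1 : X 1 ∈ J) : ∀ q : Q J, χ k J h0 h2 (ψ k J hφJ q) = q := by
  have : (χ k J h0 h2).comp ((ψ k J hφJ) : Q J →+* A k) = RingHom.id _ := by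
    apply Ideal.Quotient.ringHom_ext
    apply MvPolynomial.ringHom_ext
    · intro c
      simp only [RingHom.comp_apply, RingHom.coe_coe, ψ_mk, RingHom.id_apply]
      rw [show (MvPolynomial.C c : MvPolynomial (Fin 3) ℂ) = algebraMap ℂ _ c from rfl,
        AlgHom.commutes, IsScalarTower.algebraMap_apply ℂ (R k) (A k),
        AdjoinRoot.algebraMap_eq, χ_of, AdjoinRoot.algebraMap_eq, χ0_of]
      rfl
    · intro i
      fin_cases i
      · show χ k J h0 h2 (ψ k J hφJ (Ideal.Quotient.mk J (X 0))) = Ideal.Quotient.mk J (X 0)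
        rw [ψ_mk, φ_X0, AdjoinRoot.algebraMap_eq, χ_of, χ0_root]
      · show χ k J h0 h2 (ψ k J hφJ (Ideal.Quotient.mk J (X 1))) = Ideal.Quotient.mk J (X 1)
        rw [ψ_mk, φ_X1, map_zero]
        exact ((Ideal.Quotient.eq_zero_iff_mem).mpr hX1).symm
      · show χ k J h0 h2 (ψ k J hφJ (Ideal.Quotient.mk J (X 2))) = Ideal.Quotient.mk J (X 2)
        rw [ψ_mk, φ_X2, χ_root]
  intro q
  exact RingHom.congr_fun this q

lemma ψ_of_surj : ∀ r : R k, ∃ x : Q J, ψ k J hφJ x = AdjoinRoot.of _ r := by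
  intro r
  induction r using AdjoinRoot.induction_on with
  | ih p =>
    induction p using Polynomial.induction_on' with
    | add p q hp hq =>
      obtain ⟨x, hx⟩ := hp; obtain ⟨y, hy⟩ := hq
      exact ⟨x + y, by rw [map_add, hx, hy, ← map_add, ← map_add]⟩
    | monomial n c =>
      refine ⟨Ideal.Quotient.mk J (MvPolynomial.C c * X 0 ^ n), ?_⟩
      rw [ψ_mk, map_mul, map_pow, φ_X0, ← MvPolynomial.algebraMap_eq, AlgHom.commutes,
        mk_monomial', ← AdjoinRoot.algebraMap_eq, map_mul, map_pow,
        ← IsScalarTower.algebraMap_apply]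

lemma ψ_surj : Function.Surjective (ψ k J hφJ) := by
  intro a
  induction a using AdjoinRoot.induction_on with
  | ih p =>
    induction p using Polynomial.induction_on' with
    | add p q hp hq =>
      obtain ⟨x, hx⟩ := hp; obtain ⟨y, hy⟩ := hq
      exact ⟨x + y, by rw [map_add, hx, hy, ← map_add]⟩
    | monomial n c =>
      obtain ⟨x, hx⟩ := ψ_of_surj k J hφJ c
      refine ⟨x * Ideal.Quotient.mk J (X 2 ^ n), ?_⟩
      rw [map_mul, hx, ψ_mk, map_pow, φ_X2, mk_monomial, AdjoinRoot.algebraMap_eq]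

end Stmt1Aux
namespace Stmt1Aux
open Polynomial

variable (k : ℕ) (J : Ideal (MvPolynomial (Fin 3) ℂ))
  (hφJ : ∀ a ∈ J, φ k a = 0) (h0 : X 0 ^ k ∈ J) (h2 : 1 + X 2 ^ 2 ∈ J)

def eqv (hX1 : X 1 ∈ J) : Q J ≃ₐ[ℂ] A k :=
  AlgEquiv.ofBijective (ψ k J hφJ)
    ⟨fun a b h => by
      rw [← χ_comp_ψ k J hφJ h0 h2 hX1 a, h, χ_comp_ψ k J hφJ h0 h2 hX1], ψ_surj k J hφJ⟩

lemma eqv_mk (hX1 : X 1 ∈ J) (p : MvPolynomial (Fin 3) ℂ) :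
    eqv k J hφJ h0 h2 hX1 (Ideal.Quotient.mk J p) = φ k p := ψ_mk k J hφJ p

def bR : Module.Basis (Fin k) ℂ (R k) :=
  (AdjoinRoot.powerBasis' (monic1 k)).basis.reindex (finCongr (natDeg1 k))

lemma bR_apply (i : Fin k) : bR k i = (AdjoinRoot.root _) ^ (i : ℕ) := by
  rw [bR, Module.Basis.reindex_apply, PowerBasis.basis_eq_pow, AdjoinRoot.powerBasis'_gen]
  rfl

def cA (hk : 1 ≤ k) : Module.Basis (Fin 2) (R k) (A k) :=
  (AdjoinRoot.powerBasis' (monic2 k)).basis.reindex (finCongr (natDeg2 k hk))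

lemma cA_apply (hk : 1 ≤ k) (j : Fin 2) :
    cA k hk j = (AdjoinRoot.root _) ^ (j : ℕ) := by
  rw [cA, Module.Basis.reindex_apply, PowerBasis.basis_eq_pow, AdjoinRoot.powerBasis'_gen]
  rfl

def eidx : Fin k ⊕ Fin k ≃ Fin k × Fin 2 where
  toFun := Sum.elim (fun i => (i, 0)) (fun i => (i, 1))
  invFun p := if p.2 = 0 then Sum.inl p.1 else Sum.inr p.1
  left_inv := by rintro (i | i) <;> simp
  right_inv := by rintro ⟨i, j⟩; fin_cases j <;> simp

end Stmt1Aux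
open Stmt1Aux

/-- `Jac(f̄)` for `f̄ = y₁^(k+1) + y₂ + y₂y₃²` is `2k`-dimensional, with basis the
classes of `1, y₁, …, y₁^(k-1), y₃, y₁y₃, …, y₁^(k-1)y₃`. -/
theorem stmt1 (k : ℕ) (hk : 1 ≤ k)
    (f : MvPolynomial (Fin 3) ℂ)
    (hf : f = X 0 ^ (k + 1) + X 1 + X 1 * X 2 ^ 2)
    (J : Ideal (MvPolynomial (Fin 3) ℂ))
    (hJ : J = Ideal.span {pderiv 0 f, pderiv 1 f, pderiv 2 f}) :
    Module.finrank ℂ (MvPolynomial (Fin 3) ℂ ⧸ J) = 2 * k ∧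
    ∃ b : Module.Basis (Fin k ⊕ Fin k) ℂ (MvPolynomial (Fin 3) ℂ ⧸ J),
      (∀ i : Fin k, b (Sum.inl i) = Ideal.Quotient.mk J (X 0 ^ (i : ℕ))) ∧
      (∀ i : Fin k, b (Sum.inr i) = Ideal.Quotient.mk J (X 0 ^ (i : ℕ) * X 2)) := by
  -- derivatives
  have hd0 : pderiv 0 f = MvPolynomial.C ((k : ℂ) + 1) * X 0 ^ k := by
    subst hf; simp [pderiv_pow, pderiv_X, Pi.single_apply, pderiv_mul]
  have hd1 : pderiv 1 f = 1 + X 2 ^ 2 := by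
    subst hf; simp [pderiv_pow, pderiv_X, Pi.single_apply, pderiv_mul]
  have hd2 : pderiv 2 f = (2 : MvPolynomial (Fin 3) ℂ) * (X 1 * X 2) := by
    subst hf; simp [pderiv_pow, pderiv_X, Pi.single_apply, pderiv_mul]; ring
  -- generators in J
  have hg1 : MvPolynomial.C ((k : ℂ) + 1) * X 0 ^ k ∈ J := by
    rw [← hd0, hJ]; exact Ideal.subset_span (by simp)
  have h2 : 1 + X 2 ^ 2 ∈ J := by
    rw [← hd1, hJ]; exact Ideal.subset_span (by simp)
  have hg3 : (2 : MvPolynomial (Fin 3) ℂ) * (X 1 * X 2) ∈ J := by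
    rw [← hd2, hJ]; exact Ideal.subset_span (by simp)
  have hne : ((k : ℂ) + 1) ≠ 0 := Nat.cast_add_one_ne_zero k
  have h0 : X 0 ^ k ∈ J := by
    have := J.mul_mem_left (MvPolynomial.C (((k : ℂ) + 1)⁻¹)) hg1
    rwa [← mul_assoc, ← map_mul, inv_mul_cancel₀ hne, map_one, one_mul] at this
  have hX1 : X 1 ∈ J := by
    have m1 := J.mul_mem_left (X 1) h2
    have m2 := J.mul_mem_left (MvPolynomial.C (2⁻¹ : ℂ) * X 2) hg3
    have key : X 1 = X 1 * (1 + X 2 ^ 2)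
        - MvPolynomial.C (2⁻¹ : ℂ) * X 2 * ((2 : MvPolynomial (Fin 3) ℂ) * (X 1 * X 2)) := by
      have hc : (MvPolynomial.C (2⁻¹ : ℂ)) * 2 = (1 : MvPolynomial (Fin 3) ℂ) := by
        rw [show (2 : MvPolynomial (Fin 3) ℂ) = MvPolynomial.C (2 : ℂ) from
          (map_ofNat MvPolynomial.C 2).symm, ← map_mul]
        norm_num
      linear_combination (X 1 * X 2 ^ 2) * hc
    rw [key]; exact J.sub_mem m1 m2
  have hφJ : ∀ a ∈ J, φ k a = 0 := by
    intro a ha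
    rw [hJ] at ha
    have hle : Ideal.span {pderiv 0 f, pderiv 1 f, pderiv 2 f}
        ≤ RingHom.ker (φ k).toRingHom := by
      rw [Ideal.span_le]
      rintro x (rfl | rfl | rfl)
      · exact RingHom.mem_ker.mpr (by rw [hd0]; exact φ_gen1 k)
      · exact RingHom.mem_ker.mpr (by rw [hd1]; exact φ_gen2 k)
      · exact RingHom.mem_ker.mpr (by rw [hd2]; exact φ_gen3 k)
    exact hle ha
  -- the equivalence and basis
  let e := eqv k J hφJ h0 h2 hX1
  let B : Module.Basis (Fin k ⊕ Fin k) ℂ (A k) :=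
    ((bR k).smulTower (cA k hk)).reindex (eidx k).symm
  let b : Module.Basis (Fin k ⊕ Fin k) ℂ (MvPolynomial (Fin 3) ℂ ⧸ J) :=
    B.map e.symm.toLinearEquiv
  have hBval : ∀ s, B s = (bR k) ((eidx k s).1) • (cA k hk) ((eidx k s).2) := by
    intro s
    rw [show B s = ((bR k).smulTower (cA k hk)) ((eidx k).symm.symm s) from
      Module.Basis.reindex_apply _ _ s, Equiv.symm_symm, Module.Basis.smulTower_apply]
  have hbval : ∀ s, b s = e.symm (B s) := fun s => Module.Basis.map_apply _ _ _
  constructor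
  · rw [Module.finrank_eq_card_basis b]
    simp [two_mul]
  · refine ⟨b, fun i => ?_, fun i => ?_⟩
    · rw [hbval, AlgEquiv.symm_apply_eq, eqv_mk, hBval]
      show (bR k) i • (cA k hk) 0 = φ k (X 0 ^ (i:ℕ))
      rw [map_pow, φ_X0, bR_apply, cA_apply, Algebra.smul_def, map_pow]
      simp
    · rw [hbval, AlgEquiv.symm_apply_eq, eqv_mk, hBval]
      show (bR k) i • (cA k hk) 1 = φ k (X 0 ^ (i:ℕ) * X 2)
      rw [map_mul, map_pow, φ_X0, φ_X2, bR_apply, cA_apply, Algebra.smul_def, map_pow]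
      simp
end
end

section
/- Let f̄ = y₁² + y₂²y₃ + y₂y₃^(k+1) with k ≥ 1 (a D_{2(k+1)} type polynomial). Then Jac(f̄) has ℂ-dimension 2k+2, and in Jac(f̄) the identity [(y₂ + ½y₃^k)²] = [(2k+1)/4 · y₃^(2k)] holds. -/
open MvPolynomial

noncomputable section

namespace Stmt15A

abbrev PP := MvPolynomial (Fin 3) ℂ

def E (j i : ℕ) : Fin 3 →₀ ℕ := Finsupp.single 1 j + Finsupp.single 2 i

def G0 : PP := C 2 * X 0
def G1 (k : ℕ) : PP := C 2 * X 1 * X 2 + X 2 ^ (k+1)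
def G2 (k : ℕ) : PP := X 1 ^ 2 + C ((k:ℂ)+1) * X 1 * X 2 ^ k
def JJ (k : ℕ) : Ideal PP := Ideal.span {G0, G1 k, G2 k}

lemma E_apply0 (j i : ℕ) : E j i 0 = 0 := by simp [E, Finsupp.single_apply]
lemma E_apply1 (j i : ℕ) : E j i 1 = j := by simp [E, Finsupp.single_apply]
lemma E_apply2 (j i : ℕ) : E j i 2 = i := by simp [E, Finsupp.single_apply]

lemma E_le {j' i' j i : ℕ} : E j' i' ≤ E j i ↔ j' ≤ j ∧ i' ≤ i := by
  constructor
  · intro h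
    exact ⟨by simpa [E_apply1] using h 1, by simpa [E_apply2] using h 2⟩
  · rintro ⟨h1, h2⟩ s
    fin_cases s <;> simp [E_apply0, E_apply1, E_apply2, *]

lemma E_sub (j i j' i' : ℕ) : E j i - E j' i' = E (j - j') (i - i') := by
  ext s
  fin_cases s <;> simp [Finsupp.tsub_apply, E_apply0, E_apply1, E_apply2]

lemma E_eq_iff {j i j' i' : ℕ} : E j i = E j' i' ↔ j = j' ∧ i = i' := by
  constructor
  · intro h
    constructor
    · have := congrArg (fun g => g 1) h
      simpa [E, Finsupp.single_apply] using this
    · have := congrArg (fun g => g 2) h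
      simpa [E, Finsupp.single_apply] using this
  · rintro ⟨rfl, rfl⟩; rfl

lemma single1_eq_E (j : ℕ) : Finsupp.single (1 : Fin 3) j = E j 0 := by simp [E]
lemma single2_eq_E (i : ℕ) : Finsupp.single (2 : Fin 3) i = E 0 i := by simp [E]

lemma G0_eq : G0 = monomial (Finsupp.single 0 1) 2 := by
  rw [← C_mul_X_pow_eq_monomial, pow_one]; rfl

lemma G1_eq (k : ℕ) : G1 k = monomial (E 1 1) 2 + monomial (E 0 (k+1)) 1 := by
  rw [G1, E, show (C 2 * X 1 * X 2 : PP) = (C 2 * X 1 ^ 1) * X 2 ^ 1 by ring,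
    C_mul_X_pow_eq_monomial, X_pow_eq_monomial (n := (2 : Fin 3)), monomial_mul]
  rw [X_pow_eq_monomial]
  simp [E, ← Finsupp.single_add]

lemma G2_eq (k : ℕ) : G2 k = monomial (E 2 0) 1 + monomial (E 1 k) ((k:ℂ)+1) := by
  rw [G2, E, show (C ((k:ℂ)+1) * X 1 * X 2 ^ k : PP) = (C ((k:ℂ)+1) * X 1 ^ 1) * X 2 ^ k by ring,
    C_mul_X_pow_eq_monomial, X_pow_eq_monomial (n := (2 : Fin 3)), monomial_mul]
  rw [show (X 1 ^ 2 : PP) = monomial (Finsupp.single 1 2) 1 from X_pow_eq_monomial]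
  simp [E, ← Finsupp.single_add]

lemma coeff_comb (k : ℕ) (h0 h1 h2 : PP) (j i : ℕ) :
    coeff (E j i) (h0 * G0 + h1 * G1 k + h2 * G2 k) =
      (if 1 ≤ j ∧ 1 ≤ i then coeff (E (j-1) (i-1)) h1 * 2 else 0)
    + (if k+1 ≤ i then coeff (E j (i-(k+1))) h1 else 0)
    + (if 2 ≤ j then coeff (E (j-2) i) h2 else 0)
    + (if 1 ≤ j ∧ k ≤ i then coeff (E (j-1) (i-k)) h2 * ((k:ℂ)+1) else 0) := by
  rw [G0_eq, G1_eq k, G2_eq k, mul_add h1, mul_add h2, coeff_add, coeff_add, coeff_add, coeff_add]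
  rw [coeff_mul_monomial', coeff_mul_monomial', coeff_mul_monomial', coeff_mul_monomial',
    coeff_mul_monomial']
  have h0' : ¬ (Finsupp.single (0 : Fin 3) 1 ≤ E j i) := by
    rw [Finsupp.single_le_iff, E_apply0]; omega
  rw [if_neg h0']
  simp only [E_sub, E_le, Nat.sub_zero, mul_one, zero_add, Nat.zero_le, true_and, and_true]
  ring

lemma exists_decomp (k : ℕ) (q : PP) (hq : q ∈ JJ k) :
    ∃ h0 h1 h2 : PP, q = h0 * G0 + h1 * G1 k + h2 * G2 k := by
  rw [JJ, show ({G0, G1 k, G2 k} : Set PP) = insert G0 {G1 k, G2 k} from rfl, Ideal.mem_span_insert] at hq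
  obtain ⟨h0, z, hz, rfl⟩ := hq
  rw [Ideal.mem_span_insert] at hz
  obtain ⟨h1, w, hw, rfl⟩ := hz
  rw [Ideal.mem_span_singleton] at hw
  obtain ⟨h2, rfl⟩ := hw
  exact ⟨h0, h1, h2, by ring⟩

lemma key (k : ℕ) (hk : 1 ≤ k) (q : PP) (hq : q ∈ JJ k)
    (hmix : ∀ j i : ℕ, 1 ≤ j → 2 ≤ j + i → coeff (E j i) q = 0) :
    (∀ i, i ≤ 2*k → coeff (E 0 i) q = 0) ∧ coeff (E 1 0) q = 0 := by
  obtain ⟨h0, h1, h2, rfl⟩ := exists_decomp k q hq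
  set Q := h0 * G0 + h1 * G1 k + h2 * G2 k with hQ
  have CC := coeff_comb k h0 h1 h2
  have hA : ∀ u : ℕ, u + 2 ≤ k → coeff (E 0 u) h1 = 0 := by
    intro u hu
    have h := (hmix 1 (u+1) (by omega) (by omega)).symm.trans (CC 1 (u+1))
    rw [if_pos ⟨le_refl 1, by omega⟩, if_neg (by omega), if_neg (by omega),
      if_neg (by omega)] at h
    simpa using h.symm
  have hB : coeff (E 0 0) h2 = 0 := by
    have h := (hmix 2 0 (by omega) (by omega)).symm.trans (CC 2 0)
    rw [if_neg (by omega), if_neg (by omega), if_pos (by omega), if_neg (by omega)] at h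
    simpa using h.symm
  have hAk : coeff (E 0 (k-1)) h1 = 0 := by
    have h := (hmix 1 k (by omega) (by omega)).symm.trans (CC 1 k)
    rw [if_pos ⟨le_refl 1, hk⟩, if_neg (by omega), if_neg (by omega),
      if_pos ⟨le_refl 1, le_refl k⟩] at h
    simp only [Nat.sub_self] at h
    rw [hB] at h
    have : coeff (E 0 (k-1)) h1 * 2 = 0 := by
      have := h.symm
      simp only [zero_mul, add_zero, zero_add] at this
      linear_combination this
    simpa using this
  constructor
  · intro i hi
    rw [CC 0 i]
    by_cases hik : k + 1 ≤ i
    · rw [if_neg (by omega), if_pos hik, if_neg (by omega), if_neg (by omega)]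
      by_cases h2k : i ≤ 2*k - 1
      · rw [hA (i - (k+1)) (by omega)]; ring
      · have : i = 2*k := by omega
        subst this
        have : 2*k - (k+1) = k - 1 := by omega
        rw [this, hAk]; ring
    · rw [if_neg (by omega), if_neg hik, if_neg (by omega), if_neg (by omega)]; ring
  · rw [CC 1 0, if_neg (by omega), if_neg (by omega), if_neg (by omega), if_neg (by omega)]
    ring

lemma mem_G0 (k : ℕ) : G0 ∈ JJ k := Ideal.subset_span (by simp)
lemma mem_G1 (k : ℕ) : G1 k ∈ JJ k := Ideal.subset_span (by simp)
lemma mem_G2 (k : ℕ) : G2 k ∈ JJ k := Ideal.subset_span (by simp)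

lemma cancel_C {k : ℕ} (a : ℂ) (ha : a ≠ 0) (p : PP) (hp : C a * p ∈ JJ k) : p ∈ JJ k := by
  have : p = C a⁻¹ * (C a * p) := by
    rw [← mul_assoc, ← map_mul, inv_mul_cancel₀ ha, map_one, one_mul]
  rw [this]
  exact Ideal.mul_mem_left _ _ hp

lemma mX0 (k : ℕ) : (X 0 : PP) ∈ JJ k :=
  cancel_C 2 two_ne_zero _ (mem_G0 k)

lemma mX1X2 (k j : ℕ) : (X 1 * X 2 ^ (j+1) + C ((1:ℂ)/2) * X 2 ^ (k+j+1) : PP) ∈ JJ k := by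
  have h : (X 1 * X 2 ^ (j+1) + C ((1:ℂ)/2) * X 2 ^ (k+j+1) : PP)
      = C ((1:ℂ)/2) * X 2 ^ j * G1 k := by
    rw [G1]
    rw [show (C ((1:ℂ)/2) * X 2 ^ j * (C 2 * X 1 * X 2 + X 2 ^ (k+1)) : PP)
      = (C ((1:ℂ)/2) * C 2) * (X 1 * X 2 ^ (j+1)) + C ((1:ℂ)/2) * X 2 ^ (k+j+1) by ring]
    rw [← map_mul]
    norm_num
  rw [h]
  exact Ideal.mul_mem_left _ _ (mem_G1 k)

lemma mX1sq (m : ℕ) : (X 1 ^ 2 - C (((m:ℂ)+2)/2) * X 2 ^ (2*(m+1)) : PP) ∈ JJ (m+1) := by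
  have h : (X 1 ^ 2 - C (((m:ℂ)+2)/2) * X 2 ^ (2*(m+1)) : PP)
      = G2 (m+1) - C (((m:ℂ)+1)+1)
          * (X 1 * X 2 ^ (m+1) + C ((1:ℂ)/2) * X 2 ^ ((m+1)+m+1)) := by
    rw [G2]
    push_cast
    rw [show (C ((m:ℂ)+1+1) * (X 1 * X 2 ^ (m+1) + C ((1:ℂ)/2) * X 2 ^ (m+1+m+1)) : PP)
      = C ((m:ℂ)+1+1) * X 1 * X 2 ^ (m+1) + (C ((m:ℂ)+1+1) * C ((1:ℂ)/2)) * X 2 ^ (m+1+m+1) by ring]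
    rw [← map_mul]
    rw [show ((m:ℂ)+1+1) * ((1:ℂ)/2) = ((m:ℂ)+2)/2 by ring]
    rw [show 2*(m+1) = m+1+m+1 by ring]
    ring
  rw [h]
  exact sub_mem (mem_G2 _) (Ideal.mul_mem_left _ _ (mX1X2 (m+1) m))

lemma mX2top (k : ℕ) (hk : 1 ≤ k) : (X 2 ^ (2*k+1) : PP) ∈ JJ k := by
  have hne : (2*(k:ℂ)+1) ≠ 0 := by
    have h := Nat.cast_ne_zero (R := ℂ).mpr (show 2*k+1 ≠ 0 by omega)
    push_cast at h
    exact h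
  apply cancel_C (2*(k:ℂ)+1) hne
  have h : (C (2*(k:ℂ)+1) * X 2 ^ (2*k+1) : PP)
      = (C (2*(k:ℂ)+1) * X 2 ^ k + C 2 * X 1) * G1 k - C 4 * X 2 * G2 k := by
    rw [G1, G2]
    simp only [map_add, map_mul, map_ofNat, map_one]
    ring
  rw [h]
  exact sub_mem (Ideal.mul_mem_left _ _ (mem_G1 k)) (Ideal.mul_mem_left _ _ (mem_G2 k))

lemma smul_mk (I : Ideal PP) (a : ℂ) (p : PP) :
    a • Ideal.Quotient.mk I p = Ideal.Quotient.mk I (C a * p) := by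
  rw [show (Ideal.Quotient.mk I) p = Ideal.Quotient.mkₐ ℂ I p from rfl, ← map_smul,
    smul_eq_C_mul]
  rfl

def bas (k : ℕ) : Option (Fin (2*k+1)) → (PP ⧸ JJ k)
  | none => Ideal.Quotient.mk _ (X 1)
  | some i => Ideal.Quotient.mk _ (X 2 ^ (i : ℕ))

lemma mkX2pow_mem (k : ℕ) (hk : 1 ≤ k) (t : ℕ) :
    Ideal.Quotient.mk (JJ k) (X 2 ^ t) ∈ Submodule.span ℂ (Set.range (bas k)) := by
  by_cases ht : t ≤ 2*k
  · exact Submodule.subset_span ⟨some ⟨t, by omega⟩, rfl⟩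
  · have : Ideal.Quotient.mk (JJ k) (X 2 ^ t) = 0 := by
      rw [Ideal.Quotient.eq_zero_iff_mem]
      have : (X 2 ^ t : PP) = X 2 ^ (t - (2*k+1)) * X 2 ^ (2*k+1) := by
        rw [← pow_add]
        congr 1
        omega
      rw [this]
      exact Ideal.mul_mem_left _ _ (mX2top k hk)
    rw [this]
    exact Submodule.zero_mem _

lemma mk_eq_of_sub_mem {I : Ideal PP} {p q : PP} (h : p - q ∈ I) :
    Ideal.Quotient.mk I p = Ideal.Quotient.mk I q :=
  Ideal.Quotient.mk_eq_mk_iff_sub_mem p q |>.mpr h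

lemma mkX1X2pow (k : ℕ) (j : ℕ) :
    Ideal.Quotient.mk (JJ k) (X 1 * X 2 ^ (j+1))
      = Ideal.Quotient.mk (JJ k) (C (-(1:ℂ)/2) * X 2 ^ (k+j+1)) := by
  apply mk_eq_of_sub_mem
  have := mX1X2 k j
  convert this using 1
  rw [show C (-(1:ℂ)/2) = - C ((1:ℂ)/2) by rw [← map_neg]; norm_num]
  ring

lemma mul_X_mem (k : ℕ) (hk : 1 ≤ k) (n : Fin 3) (y : PP ⧸ JJ k)
    (hy : y ∈ Submodule.span ℂ (Set.range (bas k))) :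
    y * Ideal.Quotient.mk (JJ k) (X n) ∈ Submodule.span ℂ (Set.range (bas k)) := by
  refine Submodule.span_induction
    (p := fun z _ => z * Ideal.Quotient.mk (JJ k) (X n) ∈ Submodule.span ℂ (Set.range (bas k)))
    ?_ ?_ ?_ ?_ hy
  · rintro y ⟨t, rfl⟩
    fin_cases n
    · show bas k t * Ideal.Quotient.mk (JJ k) (X 0) ∈ _
      have h0 : Ideal.Quotient.mk (JJ k) (X 0) = 0 := by
        rw [Ideal.Quotient.eq_zero_iff_mem]; exact mX0 k
      rw [h0, mul_zero]
      exact Submodule.zero_mem _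
    · show bas k t * Ideal.Quotient.mk (JJ k) (X 1) ∈ _
      cases t with
      | none =>
        have h2 : bas k none * Ideal.Quotient.mk (JJ k) (X 1)
            = Ideal.Quotient.mk (JJ k) (X 1 ^ 2) := by
          rw [bas, ← map_mul]; ring_nf
        rw [h2]
        obtain ⟨m, rfl⟩ : ∃ m, k = m + 1 := ⟨k - 1, by omega⟩
        have h3 : Ideal.Quotient.mk (JJ (m+1)) (X 1 ^ 2)
            = Ideal.Quotient.mk (JJ (m+1)) (C (((m:ℂ)+2)/2) * X 2 ^ (2*(m+1))) := by
          exact mk_eq_of_sub_mem (mX1sq m)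
        rw [h3, ← smul_mk]
        exact Submodule.smul_mem _ _ (mkX2pow_mem (m+1) (by omega) _)
      | some i =>
        rcases Nat.eq_zero_or_pos (i : ℕ) with hi | hi
        · have h2 : bas k (some i) * Ideal.Quotient.mk (JJ k) (X 1) = bas k none := by
            rw [bas, bas, ← map_mul, hi]
            ring_nf
          rw [h2]
          exact Submodule.subset_span ⟨none, rfl⟩
        · obtain ⟨j, hj⟩ : ∃ j, (i:ℕ) = j + 1 := ⟨(i:ℕ) - 1, by omega⟩
          have h2 : bas k (some i) * Ideal.Quotient.mk (JJ k) (X 1)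
              = Ideal.Quotient.mk (JJ k) (X 1 * X 2 ^ (j+1)) := by
            rw [bas, ← map_mul, hj]; ring_nf
          rw [h2, mkX1X2pow, ← smul_mk]
          exact Submodule.smul_mem _ _ (mkX2pow_mem k hk _)
    · show bas k t * Ideal.Quotient.mk (JJ k) (X 2) ∈ _
      cases t with
      | none =>
        have h2 : bas k none * Ideal.Quotient.mk (JJ k) (X 2)
            = Ideal.Quotient.mk (JJ k) (X 1 * X 2 ^ (0+1)) := by
          rw [bas, ← map_mul]; ring_nf
        rw [h2, mkX1X2pow, ← smul_mk]
        exact Submodule.smul_mem _ _ (mkX2pow_mem k hk _)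
      | some i =>
        have h2 : bas k (some i) * Ideal.Quotient.mk (JJ k) (X 2)
            = Ideal.Quotient.mk (JJ k) (X 2 ^ ((i:ℕ)+1)) := by
          rw [bas, ← map_mul, pow_succ]
        rw [h2]
        exact mkX2pow_mem k hk _
  · show (0 : PP ⧸ JJ k) * Ideal.Quotient.mk (JJ k) (X n) ∈ _
    rw [zero_mul]; exact Submodule.zero_mem _
  · intro y z _ _ hy hz
    show (y + z) * Ideal.Quotient.mk (JJ k) (X n) ∈ _
    rw [add_mul]
    exact Submodule.add_mem _ hy hz
  · intro a y _ hy
    show (a • y) * Ideal.Quotient.mk (JJ k) (X n) ∈ _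
    rw [smul_mul_assoc]
    exact Submodule.smul_mem _ _ hy

lemma span_top (k : ℕ) (hk : 1 ≤ k) :
    ⊤ ≤ Submodule.span ℂ (Set.range (bas k)) := by
  have main : ∀ p : PP, Ideal.Quotient.mk (JJ k) p ∈ Submodule.span ℂ (Set.range (bas k)) := by
    intro p
    induction p using MvPolynomial.induction_on with
    | C a =>
      have h1 : Ideal.Quotient.mk (JJ k) (C a) = a • bas k (some 0) := by
        rw [bas, smul_mk]
        congr 1
        simp
      rw [h1]
      exact Submodule.smul_mem _ _ (Submodule.subset_span ⟨some 0, rfl⟩)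
    | add p q hp hq =>
      rw [map_add]
      exact Submodule.add_mem _ hp hq
    | mul_X p n hp =>
      rw [map_mul]
      exact mul_X_mem k hk n _ hp
  intro x _
  obtain ⟨p, rfl⟩ := Ideal.Quotient.mk_surjective x
  exact main p

lemma indep (k : ℕ) (hk : 1 ≤ k) : LinearIndependent ℂ (bas k) := by
  rw [Fintype.linearIndependent_iff]
  intro g hg
  set q : PP := C (g none) * X 1 + ∑ i : Fin (2*k+1), C (g (some i)) * X 2 ^ (i : ℕ) with hq
  have hmk : ∑ t, g t • bas k t = Ideal.Quotient.mk (JJ k) q := by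
    rw [Fintype.sum_option, hq, map_add, map_sum]
    congr 1
    · rw [bas, smul_mk]
    · refine Finset.sum_congr rfl fun i _ => ?_
      rw [bas, smul_mk]
  rw [hmk, Ideal.Quotient.eq_zero_iff_mem] at hg
  -- coefficients of q
  have cq : ∀ j i : ℕ, coeff (E j i) q
      = (if j = 1 ∧ i = 0 then g none else 0)
        + ∑ t : Fin (2*k+1), (if j = 0 ∧ i = (t:ℕ) then g (some t) else 0) := by
    intro j i
    rw [hq, coeff_add, coeff_C_mul, coeff_sum]
    congr 1
    · rw [coeff_X', single1_eq_E]
      by_cases h : j = 1 ∧ i = 0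
      · rw [if_pos (E_eq_iff.mpr ⟨h.1.symm, h.2.symm⟩), if_pos h, mul_one]
      · rw [if_neg, if_neg h, mul_zero]
        intro hc
        rw [E_eq_iff] at hc
        exact h ⟨hc.1.symm, hc.2.symm⟩
    · refine Finset.sum_congr rfl fun t _ => ?_
      rw [coeff_C_mul, coeff_X_pow, single2_eq_E]
      by_cases h : j = 0 ∧ i = (t:ℕ)
      · rw [if_pos (E_eq_iff.mpr ⟨h.1.symm, h.2.symm⟩), if_pos h, mul_one]
      · rw [if_neg, if_neg h, mul_zero]
        intro hc
        rw [E_eq_iff] at hc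
        exact h ⟨hc.1.symm, hc.2.symm⟩
  have hmix : ∀ j i : ℕ, 1 ≤ j → 2 ≤ j + i → coeff (E j i) q = 0 := by
    intro j i hj hji
    rw [cq j i, if_neg (by omega), Finset.sum_eq_zero fun t _ => if_neg (by omega)]
    simp
  obtain ⟨h1, h2⟩ := key k hk q hg hmix
  intro t
  cases t with
  | none =>
    have := h2
    rw [cq 1 0, if_pos ⟨rfl, rfl⟩, Finset.sum_eq_zero fun t _ => if_neg (by omega)] at this
    simpa using this
  | some i =>
    have hi := h1 (i : ℕ) (by omega)
    rw [cq 0 (i : ℕ)] at hi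
    rw [if_neg (by omega), Finset.sum_eq_single i, if_pos ⟨rfl, rfl⟩] at hi
    · simpa using hi
    · intro t _ ht
      exact if_neg (by simp [Fin.val_eq_val, ht]; omega)
    · intro h
      exact absurd (Finset.mem_univ i) h

lemma identity_mem (m : ℕ) :
    ((X 1 + C ((1:ℂ)/2) * X 2 ^ (m+1)) ^ 2
      - C ((2*((m:ℂ)+1)+1)/4) * X 2 ^ (2*(m+1)) : PP) ∈ JJ (m+1) := by
  apply cancel_C (4:ℂ) (by norm_num)
  have h1 : (X 1 + C ((1:ℂ)/2) * X 2 ^ (m+1) : PP)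
      = C ((1:ℂ)/2) * (C 2 * X 1 + X 2 ^ (m+1)) := by
    rw [mul_add, ← mul_assoc, ← map_mul]
    norm_num
  have hexp : (C (4:ℂ) : PP) * ((X 1 + C ((1:ℂ)/2) * X 2 ^ (m+1)) ^ 2
        - C ((2*((m:ℂ)+1)+1)/4) * X 2 ^ (2*(m+1)))
      = (C 2 * X 1 + X 2 ^ (m+1))^2 - C (2*((m:ℂ)+1)+1) * X 2 ^ (2*(m+1)) := by
    rw [h1, mul_pow, ← map_pow, mul_sub, ← mul_assoc, ← map_mul, ← mul_assoc, ← map_mul]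
    rw [show (4:ℂ) * ((1:ℂ)/2)^2 = 1 by norm_num,
      show (4:ℂ) * ((2*((m:ℂ)+1)+1)/4) = 2*((m:ℂ)+1)+1 by ring, map_one, one_mul]
  rw [hexp]
  have hcomb : ((C 2 * X 1 + X 2 ^ (m+1))^2 - C (2*((m:ℂ)+1)+1) * X 2 ^ (2*(m+1)) : PP)
      = C 4 * G2 (m+1) - (C 2 * C (((m:ℕ):ℂ)+1) * X 2 ^ m) * G1 (m+1) := by
    rw [G1, G2]
    push_cast
    simp only [map_add, map_mul, map_ofNat, map_one]
    ring
  rw [hcomb]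
  exact sub_mem (Ideal.mul_mem_left _ _ (mem_G2 _)) (Ideal.mul_mem_left _ _ (mem_G1 _))

end Stmt15A

open Stmt15A in
/-- For `f̄ = y₁² + y₂²y₃ + y₂y₃^(k+1)` (`k ≥ 1`), `Jac(f̄)` has dimension
`2k + 2`, and in `Jac(f̄)` the identity `[(y₂ + ½y₃^k)²] = [(2k+1)/4 · y₃^(2k)]`
holds. -/
theorem stmt15 (k : ℕ) (hk : 1 ≤ k)
    (f : MvPolynomial (Fin 3) ℂ)
    (hf : f = X 0 ^ 2 + X 1 ^ 2 * X 2 + X 1 * X 2 ^ (k + 1))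
    (J : Ideal (MvPolynomial (Fin 3) ℂ))
    (hJ : J = Ideal.span {pderiv 0 f, pderiv 1 f, pderiv 2 f}) :
    Module.finrank ℂ (MvPolynomial (Fin 3) ℂ ⧸ J) = 2 * k + 2 ∧
    Ideal.Quotient.mk J ((X 1 + C ((1 : ℂ) / 2) * X 2 ^ k) ^ 2)
      = Ideal.Quotient.mk J (C ((2 * (k : ℂ) + 1) / 4) * X 2 ^ (2 * k)) := by
  have hp0 : pderiv 0 f = C 2 * X 0 := by
    subst hf
    simp [pderiv_mul, pderiv_pow, pderiv_X_self, pderiv_X_of_ne, map_ofNat]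
  have hp1 : pderiv 1 f = G1 k := by
    subst hf
    rw [G1]
    simp [pderiv_mul, pderiv_pow, pderiv_X_self, pderiv_X_of_ne, map_ofNat]
    ring
  have hp2 : pderiv 2 f = G2 k := by
    subst hf
    rw [G2]
    simp [pderiv_mul, pderiv_pow, pderiv_X_self, pderiv_X_of_ne, map_ofNat, map_add,
      map_natCast, map_one]
    ring
  have hJJ : J = JJ k := by
    rw [hJ, hp0, hp1, hp2, JJ, G0]
  subst hJJ
  constructor
  · have b : Module.Basis (Option (Fin (2*k+1))) ℂ (PP ⧸ JJ k) := Module.Basis.mk (indep k hk) (span_top k hk)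
    rw [Module.finrank_eq_card_basis b, Fintype.card_option, Fintype.card_fin]
  · obtain ⟨m, rfl⟩ : ∃ m, k = m + 1 := ⟨k - 1, by omega⟩
    apply mk_eq_of_sub_mem
    have := identity_mem m
    convert this using 2
    push_cast
    ring
end
end

section
/- Let f = x₁² + x₂² + x₂x₃^(2k+1), k ≥ 1 (the A_{4k+1} singularity in these coordinates). Then Jac(f) has dimension 4k+1 over ℂ. Moreover, for g acting by (x₁,x₂,x₃) ↦ (x₁,-x₂,-x₃), f is g-invariant and the g-invariant subspace of Jac(f) has dimension 2k+1, spanned by the classes of 1, x₃², x₃⁴, …, x₃^(4k). -/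
open MvPolynomial

noncomputable section

set_option maxHeartbeats 1000000 in
set_option synthInstance.maxHeartbeats 400000 in
/-- For `f = x₁² + x₂² + x₂x₃^(2k+1)` (`k ≥ 1`): `Jac(f)` has dimension `4k+1`;
moreover `g : (x₁,x₂,x₃) ↦ (x₁,-x₂,-x₃)` preserves `f` and the `g`-invariant
subspace of `Jac(f)` has dimension `2k+1`, spanned by the classes of
`1, x₃², …, x₃^(4k)`. -/
theorem stmt16 (k : ℕ) (hk : 1 ≤ k)
    (f : MvPolynomial (Fin 3) ℂ)
    (hf : f = X 0 ^ 2 + X 1 ^ 2 + X 1 * X 2 ^ (2 * k + 1))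
    (J : Ideal (MvPolynomial (Fin 3) ℂ))
    (hJ : J = Ideal.span {pderiv 0 f, pderiv 1 f, pderiv 2 f})
    (σ : MvPolynomial (Fin 3) ℂ →ₐ[ℂ] MvPolynomial (Fin 3) ℂ)
    (hσ : σ = aeval ![X 0, -X 1, -X 2]) :
    Module.finrank ℂ (MvPolynomial (Fin 3) ℂ ⧸ J) = 4 * k + 1 ∧
    σ f = f ∧
    ∃ σbar : (MvPolynomial (Fin 3) ℂ ⧸ J) →ₗ[ℂ] (MvPolynomial (Fin 3) ℂ ⧸ J),
      (∀ p : MvPolynomial (Fin 3) ℂ,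
        σbar (Ideal.Quotient.mk J p) = Ideal.Quotient.mk J (σ p)) ∧
      ∃ b : Module.Basis (Fin (2 * k + 1)) ℂ (Module.End.eigenspace σbar 1),
        ∀ i : Fin (2 * k + 1), (b i : MvPolynomial (Fin 3) ℂ ⧸ J)
          = Ideal.Quotient.mk J (X 2 ^ (2 * (i : ℕ))) := by
  classical
  have hoddE : Odd (2 * k + 1) := ⟨k, rfl⟩
  have hevenE : Even (2 * k) := ⟨k, (two_mul k)⟩
  have hC2 : (2 : MvPolynomial (Fin 3) ℂ) = C (2:ℂ) := (map_ofNat C 2).symm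
  -- closed forms for the generators
  have hg0 : pderiv 0 f = 2 * X 0 := by
    rw [hf]; simp [pderiv_X, Pi.single_apply]
  have hg1 : pderiv 1 f = 2 * X 1 + X 2 ^ (2 * k + 1) := by
    rw [hf]; simp [pderiv_X, Pi.single_apply]
  have hg2 : pderiv 2 f = C ((2 * k + 1 : ℕ) : ℂ) *
      (X 1 * X 2 ^ (2 * k)) := by
    rw [hf]; simp [pderiv_X, Pi.single_apply]
    rw [← hC2]; push_cast; ring
  -- memberships
  have hm0 : pderiv (R := ℂ) 0 f ∈ J := by
    rw [hJ]; exact Ideal.subset_span (by simp)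
  have hm1 : pderiv (R := ℂ) 1 f ∈ J := by
    rw [hJ]; exact Ideal.subset_span (by simp)
  have hm2 : pderiv (R := ℂ) 2 f ∈ J := by
    rw [hJ]; exact Ideal.subset_span (by simp)
  have hX0 : (X 0 : MvPolynomial (Fin 3) ℂ) ∈ J := by
    have h := J.mul_mem_left (C (1/2 : ℂ)) hm0
    rw [hg0, hC2, ← mul_assoc, ← C_mul] at h
    norm_num at h
    exact h
  have hX1c : (X 1 + C (1/2 : ℂ) * X 2 ^ (2*k+1) : MvPolynomial (Fin 3) ℂ) ∈ J := by
    have h := J.mul_mem_left (C (1/2 : ℂ)) hm1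
    rw [hg1, mul_add, hC2, ← mul_assoc, ← C_mul] at h
    norm_num at h
    exact h
  have hnk : ((2 * k + 1 : ℕ) : ℂ) ≠ 0 := Nat.cast_ne_zero.mpr (by omega)
  have hX12 : (X 1 * X 2 ^ (2*k) : MvPolynomial (Fin 3) ℂ) ∈ J := by
    have h := J.mul_mem_left (C (((2 * k + 1 : ℕ) : ℂ)⁻¹)) hm2
    rw [hg2, ← mul_assoc, ← C_mul, inv_mul_cancel₀ hnk, C_1, one_mul] at h
    exact h
  have hX2pow : (X 2 ^ (4*k+1) : MvPolynomial (Fin 3) ℂ) ∈ J := by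
    have h1 := J.mul_mem_left (X 2 ^ (2*k)) hm1
    rw [hg1] at h1
    have h := J.sub_mem h1 (J.mul_mem_left 2 hX12)
    convert h using 1
    rw [show 4*k+1 = (2*k+1)+(2*k) by ring]
    ring
  -- the AdjoinRoot model
  set n := 4*k+1 with hn
  have hne : (Polynomial.X : Polynomial ℂ) ^ n ≠ 0 :=
    pow_ne_zero _ Polynomial.X_ne_zero
  set A := AdjoinRoot ((Polynomial.X : Polynomial ℂ) ^ n) with hA
  set r : A := AdjoinRoot.root ((Polynomial.X : Polynomial ℂ) ^ n) with hr
  have hroot : r ^ n = 0 := by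
    rw [hr, ← AdjoinRoot.mk_X, ← map_pow, AdjoinRoot.mk_self]
  have haev : (Polynomial.aeval (Ideal.Quotient.mk J (X 2)))
      ((Polynomial.X : Polynomial ℂ) ^ n) = 0 := by
    rw [map_pow, Polynomial.aeval_X, ← map_pow, Ideal.Quotient.eq_zero_iff_mem]
    exact hX2pow
  set e1 : A →ₐ[ℂ] (MvPolynomial (Fin 3) ℂ ⧸ J) :=
    AdjoinRoot.liftAlgHom _ (Algebra.ofId ℂ _) (Ideal.Quotient.mk J (X 2)) haev with he1
  set v : Fin 3 → A := ![0, algebraMap ℂ A (-(1/2)) * r ^ (2*k+1), r] with hv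
  have hv0 : v 0 = 0 := rfl
  have hv1 : v 1 = algebraMap ℂ A (-(1/2)) * r ^ (2*k+1) := rfl
  have hv2 : v 2 = r := rfl
  have hker : ∀ a ∈ J, (aeval v) a = 0 := by
    intro a ha
    rw [hJ] at ha
    have hle : Ideal.span {pderiv 0 f, pderiv 1 f, pderiv 2 f} ≤
        RingHom.ker ((aeval v : MvPolynomial (Fin 3) ℂ →ₐ[ℂ] A) : MvPolynomial (Fin 3) ℂ →+* A) := by
      rw [Ideal.span_le]
      rintro p hp
      simp only [Set.mem_insert_iff, Set.mem_singleton_iff] at hp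
      rcases hp with rfl | rfl | rfl <;>
        simp only [SetLike.mem_coe, RingHom.mem_ker, AlgHom.coe_toRingHom]
      · rw [hg0]; simp [hv0]
      · rw [hg1]
        simp only [map_add, map_mul, map_pow, map_ofNat, aeval_X, hv1, hv2]
        rw [show (2 : A) = algebraMap ℂ A 2 from (map_ofNat _ 2).symm,
          ← mul_assoc, ← map_mul, show (2:ℂ) * -(1/2) = -1 by norm_num,
          map_neg, map_one]
        ring
      · rw [hg2]
        simp only [map_mul, map_pow, aeval_X, aeval_C, hv1, hv2]
        rw [mul_assoc, ← pow_add, show 2*k+1+2*k = n by omega, hroot]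
        ring
    exact hle ha
  set e2 : (MvPolynomial (Fin 3) ℂ ⧸ J) →ₐ[ℂ] A :=
    Ideal.Quotient.liftₐ J (aeval v) hker with he2
  have he2mk : ∀ p, e2 (Ideal.Quotient.mk J p) = aeval v p := by
    intro p
    rw [he2]
    rfl
  have he1r : e1 r = Ideal.Quotient.mk J (X 2) := AdjoinRoot.liftAlgHom_root _ _ _ haev
  have heq1 : e1.comp e2 = AlgHom.id ℂ _ := by
    apply Ideal.Quotient.algHom_ext
    apply MvPolynomial.algHom_ext
    intro i
    simp only [AlgHom.coe_comp, Function.comp_apply, Ideal.Quotient.mkₐ_eq_mk,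
      AlgHom.coe_id, id_eq]
    rw [he2mk, aeval_X]
    fin_cases i
    · simp [hv]
      exact ((Ideal.Quotient.eq_zero_iff_mem).mpr hX0).symm
    · simp [hv]
      rw [he1r, ← map_pow, show (algebraMap ℂ (MvPolynomial (Fin 3) ℂ ⧸ J)) 2⁻¹ =
        Ideal.Quotient.mk J (C (2⁻¹ : ℂ)) from rfl, show (2⁻¹:ℂ) = 1/2 by norm_num]
      have h := (Ideal.Quotient.eq_zero_iff_mem).mpr hX1c
      rw [map_add, map_mul] at h
      linear_combination -h
    · simp [hv]
      exact he1r
  have heq2 : e2.comp e1 = AlgHom.id ℂ _ := by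
    apply AdjoinRoot.algHom_ext
    simp only [AlgHom.coe_comp, Function.comp_apply, AlgHom.coe_id, id_eq]
    rw [show AdjoinRoot.root ((Polynomial.X : Polynomial ℂ) ^ n) = r from rfl,
      he1r, he2mk, aeval_X, hv2]
    rfl
  set e : A ≃ₐ[ℂ] (MvPolynomial (Fin 3) ℂ ⧸ J) :=
    AlgEquiv.ofAlgHom e1 e2 heq1 heq2 with he
  set pb := AdjoinRoot.powerBasis hne with hpb
  have hdim : pb.dim = n := by
    rw [hpb, AdjoinRoot.powerBasis_dim, Polynomial.natDegree_X_pow]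
  set B : Module.Basis (Fin n) ℂ (MvPolynomial (Fin 3) ℂ ⧸ J) :=
    (pb.basis.map e.toLinearEquiv).reindex (finCongr hdim) with hBdef
  have hB : ∀ j : Fin n, B j = Ideal.Quotient.mk J (X 2 ^ (j : ℕ)) := by
    intro j
    rw [hBdef, Module.Basis.reindex_apply, Module.Basis.map_apply, pb.basis_eq_pow]
    have hgen : pb.gen = r := AdjoinRoot.powerBasis_gen hne
    rw [hgen]
    show e (r ^ ((finCongr hdim).symm j : ℕ)) = _
    rw [map_pow, show e r = e1 r from rfl, he1r, ← map_pow]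
    congr 1
  -- σ stabilizes J
  have hσ0 : σ (pderiv 0 f) = pderiv 0 f := by
    rw [hg0, hσ]; simp [map_ofNat]
  have hσ1 : σ (pderiv 1 f) = -(pderiv 1 f) := by
    rw [hg1, hσ]
    simp only [map_add, map_mul, map_pow, map_ofNat, aeval_X,
      Matrix.cons_val_one, Matrix.head_cons, Matrix.cons_val_zero, Matrix.cons_val_two,
      Matrix.tail_cons]
    rw [Odd.neg_pow hoddE]
    ring
  have hσ2 : σ (pderiv 2 f) = -(pderiv 2 f) := by
    rw [hg2, hσ]
    simp only [map_mul, map_pow, aeval_C, aeval_X,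
      Matrix.cons_val_one, Matrix.head_cons, Matrix.cons_val_zero, Matrix.cons_val_two,
      Matrix.tail_cons]
    rw [Even.neg_pow hevenE]
    simp only [MvPolynomial.algebraMap_eq]
    ring
  have hσJ : ∀ a ∈ J, σ a ∈ J := by
    intro a ha
    have hmap : J.map (σ : MvPolynomial (Fin 3) ℂ →+* MvPolynomial (Fin 3) ℂ) ≤ J := by
      conv_lhs => rw [hJ]
      rw [Ideal.map_span, Ideal.span_le]
      rintro q ⟨p, hp, rfl⟩
      simp only [Set.mem_insert_iff, Set.mem_singleton_iff] at hp
      rcases hp with rfl | rfl | rfl <;> simp only [SetLike.mem_coe, RingHom.coe_coe]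
      · rw [hσ0]; exact hm0
      · rw [hσ1]; exact J.neg_mem hm1
      · rw [hσ2]; exact J.neg_mem hm2
    exact hmap (Ideal.mem_map_of_mem _ ha)
  have hker2 : ∀ a ∈ J, ((Ideal.Quotient.mkₐ ℂ J).comp σ) a = 0 := by
    intro a ha
    simp only [AlgHom.coe_comp, Function.comp_apply, Ideal.Quotient.mkₐ_eq_mk]
    rw [Ideal.Quotient.eq_zero_iff_mem]
    exact hσJ a ha
  set σb : (MvPolynomial (Fin 3) ℂ ⧸ J) →ₐ[ℂ] (MvPolynomial (Fin 3) ℂ ⧸ J) :=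
    Ideal.Quotient.liftₐ J ((Ideal.Quotient.mkₐ ℂ J).comp σ) hker2 with hσbdef
  have hσbmk : ∀ p, σb (Ideal.Quotient.mk J p) = Ideal.Quotient.mk J (σ p) := by
    intro p
    rw [hσbdef]
    rfl
  have hσX2 : ∀ m : ℕ, σ (X 2 ^ m) = (-1)^m * X 2 ^ m := by
    intro m
    rw [hσ, map_pow]
    simp only [aeval_X, Matrix.cons_val_two, Matrix.tail_cons, Matrix.head_cons]
    rw [neg_pow]
  have hσB : ∀ j : Fin n, σb.toLinearMap (B j) = ((-1:ℂ)^(j:ℕ)) • B j := by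
    intro j
    have h1 : ((-1 : MvPolynomial (Fin 3) ℂ))^(j:ℕ) * X 2^(j:ℕ)
        = ((-1:ℂ)^(j:ℕ)) • (X 2^(j:ℕ) : MvPolynomial (Fin 3) ℂ) := by
      rw [smul_eq_C_mul]
      congr 1
      rw [map_pow, map_neg, map_one]
    calc σb.toLinearMap (B j)
        = Ideal.Quotient.mkₐ ℂ J (((-1:ℂ)^(j:ℕ)) • (X 2^(j:ℕ) : MvPolynomial (Fin 3) ℂ)) := by
          rw [AlgHom.toLinearMap_apply, hB, hσbmk, hσX2, h1, Ideal.Quotient.mkₐ_eq_mk]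
      _ = ((-1:ℂ)^(j:ℕ)) • B j := by
          rw [map_smul, Ideal.Quotient.mkₐ_eq_mk, hB]
  have hlt : ∀ i : Fin (2*k+1), 2*(i:ℕ) < n := by
    intro i
    have := i.2
    omega
  have hmem : ∀ i : Fin (2*k+1),
      B ⟨2*(i:ℕ), hlt i⟩ ∈ Module.End.eigenspace σb.toLinearMap 1 := by
    intro i
    rw [Module.End.mem_eigenspace_iff, hσB]
    norm_num
  set w : Fin (2*k+1) → Module.End.eigenspace σb.toLinearMap 1 :=
    fun i => ⟨B ⟨2*(i:ℕ), hlt i⟩, hmem i⟩ with hw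
  have hli : LinearIndependent ℂ w := by
    apply LinearIndependent.of_comp (Module.End.eigenspace σb.toLinearMap 1).subtype
    have hc : ((Module.End.eigenspace σb.toLinearMap 1).subtype) ∘ w
        = (⇑B) ∘ (fun i : Fin (2*k+1) => (⟨2*(i:ℕ), hlt i⟩ : Fin n)) := rfl
    rw [hc]
    exact B.linearIndependent.comp _ (by
      intro a b hab
      simp only [Fin.mk.injEq] at hab
      exact Fin.ext (by omega))
  have hoddc : ∀ (x : MvPolynomial (Fin 3) ℂ ⧸ J), σb.toLinearMap x = x →
      ∀ j : Fin n, Odd (j:ℕ) → B.repr x j = 0 := by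
    intro x hx j hj
    have h1 : ∑ j' : Fin n, ((-1:ℂ)^(j':ℕ) * B.repr x j') • B j'
        = ∑ j' : Fin n, B.repr x j' • B j' := by
      have hs := B.sum_repr x
      calc ∑ j' : Fin n, ((-1:ℂ)^(j':ℕ) * B.repr x j') • B j'
          = σb.toLinearMap (∑ j' : Fin n, B.repr x j' • B j') := by
            rw [map_sum]
            refine Finset.sum_congr rfl (fun j' _ => ?_)
            rw [map_smul, hσB, smul_smul, mul_comm]
        _ = x := by rw [hs]; exact hx
        _ = ∑ j' : Fin n, B.repr x j' • B j' := hs.symm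
    have h2 := congrArg (fun y => B.repr y j) h1
    simp only [map_sum, map_smul, Module.Basis.repr_self, Finsupp.smul_single,
      smul_eq_mul, mul_one, Finsupp.coe_finset_sum, Finset.sum_apply,
      Finsupp.single_apply, Finset.sum_ite_eq', Finset.mem_univ, if_true] at h2
    rw [Odd.neg_one_pow hj] at h2
    have h3 : B.repr x j + B.repr x j = 0 := by linear_combination -h2
    exact add_self_eq_zero.mp h3
  have hspan : ⊤ ≤ Submodule.span ℂ (Set.range w) := by
    rintro x -
    rw [Submodule.mem_span_range_iff_exists_fun]
    refine ⟨fun i => B.repr (x : MvPolynomial (Fin 3) ℂ ⧸ J) ⟨2*(i:ℕ), hlt i⟩, ?_⟩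
    have hx' : σb.toLinearMap (x : MvPolynomial (Fin 3) ℂ ⧸ J) = (x : MvPolynomial (Fin 3) ℂ ⧸ J) := by
      have hh := Module.End.mem_eigenspace_iff.mp x.2
      rwa [one_smul] at hh
    apply Subtype.ext
    have hcoe : ((∑ i : Fin (2*k+1), B.repr (x : MvPolynomial (Fin 3) ℂ ⧸ J) ⟨2*(i:ℕ), hlt i⟩ • w i :
        Module.End.eigenspace σb.toLinearMap 1) : MvPolynomial (Fin 3) ℂ ⧸ J)
        = ∑ i : Fin (2*k+1), B.repr (x : MvPolynomial (Fin 3) ℂ ⧸ J) ⟨2*(i:ℕ), hlt i⟩ • B ⟨2*(i:ℕ), hlt i⟩ := by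
      rw [AddSubmonoidClass.coe_finset_sum]
      rfl
    rw [hcoe]
    conv_rhs => rw [← B.sum_repr (x : MvPolynomial (Fin 3) ℂ ⧸ J)]
    rw [← Finset.sum_filter_add_sum_filter_not Finset.univ
      (fun j : Fin n => Even (j:ℕ))]
    have hz : ∑ j ∈ Finset.univ.filter (fun j : Fin n => ¬ Even (j:ℕ)),
        B.repr (x : MvPolynomial (Fin 3) ℂ ⧸ J) j • B j = 0 := by
      refine Finset.sum_eq_zero (fun j hj => ?_)
      rw [hoddc _ hx' j (Nat.not_even_iff_odd.mp (Finset.mem_filter.mp hj).2),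
        zero_smul]
    rw [hz, add_zero]
    have ef : ∀ (j : Fin n), (j:ℕ)/2 < 2*k+1 := fun j => by have := j.2; omega
    refine (Finset.sum_nbij' (fun j : Fin n => (⟨(j:ℕ)/2, ef j⟩ : Fin (2*k+1)))
      (fun i : Fin (2*k+1) => (⟨2*(i:ℕ), hlt i⟩ : Fin n)) ?_ ?_ ?_ ?_ ?_).symm
    · intro a _
      exact Finset.mem_univ _
    · intro a _
      refine Finset.mem_filter.mpr ⟨Finset.mem_univ _, ?_⟩
      show Even (2*(a:ℕ))
      exact even_two_mul _
    · intro a ha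
      obtain ⟨m, hm⟩ := (Finset.mem_filter.mp ha).2
      apply Fin.ext
      show 2*((a:ℕ)/2) = (a:ℕ)
      omega
    · intro a _
      apply Fin.ext
      show (2*(a:ℕ))/2 = (a:ℕ)
      omega
    · intro a ha
      obtain ⟨m, hm⟩ := (Finset.mem_filter.mp ha).2
      have he : (⟨2*((a:ℕ)/2), hlt ⟨(a:ℕ)/2, ef a⟩⟩ : Fin n) = a := by
        apply Fin.ext
        show 2*((a:ℕ)/2) = (a:ℕ)
        omega
      conv_lhs => rw [← he]
  refine ⟨?_, ?_, σb.toLinearMap, hσbmk, Module.Basis.mk hli hspan, fun i => ?_⟩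
  · rw [Module.finrank_eq_card_basis B, Fintype.card_fin]
  · rw [hσ, hf]
    simp only [map_add, map_mul, map_pow, aeval_X, Matrix.cons_val_zero,
      Matrix.cons_val_one, Matrix.head_cons, Matrix.cons_val_two, Matrix.tail_cons]
    rw [Odd.neg_pow hoddE]
    ring
  rw [Module.Basis.mk_apply]
  show (B ⟨2*(i:ℕ), hlt i⟩ : MvPolynomial (Fin 3) ℂ ⧸ J) = _
  rw [hB]
end
end

section
/- Let F^G = x₁² + x₂² + x₂x₃^(2k+1) + Σ_{α=0}^{2k} s_α x₃^(2α) and consider the quotient module M = Ω³ ⊗ ℂ[[z]] ⊗ ℂ[s] / (zd + dF^G∧)(Ω² ⊗ ℂ[[z]] ⊗ ℂ[s]). Then for 2k+1 ≤ α+β ≤ 4k with p := α+β-(2k+1) ≥ 0, the relation [x₃^(2(α+β))] = (4/(2k+1))·[z(p+½)x₃^(2p) + Σ_{γ=0}^{2k} γ s_γ x₃^(2(γ+p))] holds in M. -/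
open MvPolynomial

noncomputable section

/-- Relation in the Brieskorn-type module of
`F^G = x₁² + x₂² + x₂x₃^(2k+1) + Σ_{γ=0}^{2k} s_γ x₃^(2γ)`.
Variables of `MvPolynomial ℕ ℂ`: `0,1,2` are `x₁,x₂,x₃`, `3` is `z`, and
`4+γ` is `s_γ`.  A 2-form `A dx₂∧dx₃ + B dx₃∧dx₁ + C dx₁∧dx₂` maps under
`zd + dF^G∧` to `z(∂₁A + ∂₂B + ∂₃C) + ∂₁F·A + ∂₂F·B + ∂₃F·C`.  For
`2k+1 ≤ α+β ≤ 4k` and `p = α+β-(2k+1)` the relation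
`[x₃^(2(α+β))] = (4/(2k+1))·[z(p+½)x₃^(2p) + Σ_γ γ s_γ x₃^(2(γ+p))]`
holds in the quotient, i.e. the difference lies in the image. -/
theorem stmt18 (k : ℕ) (hk : 1 ≤ k) (α β p : ℕ)
    (h1 : 2 * k + 1 ≤ α + β) (h2 : α + β ≤ 4 * k)
    (hp : p = α + β - (2 * k + 1))
    (F : MvPolynomial ℕ ℂ)
    (hF : F = X 0 ^ 2 + X 1 ^ 2 + X 1 * X 2 ^ (2 * k + 1)
      + ∑ γ ∈ Finset.range (2 * k + 1), X (4 + γ) * X 2 ^ (2 * γ)) :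
    ∃ A B C' : MvPolynomial ℕ ℂ,
      (X 2 ^ (2 * (α + β))
        - C ((4 : ℂ) / (2 * (k : ℂ) + 1)) *
          (X 3 * C ((p : ℂ) + 1 / 2) * X 2 ^ (2 * p)
            + ∑ γ ∈ Finset.range (2 * k + 1),
                C ((γ : ℂ)) * X (4 + γ) * X 2 ^ (2 * (γ + p))) :
        MvPolynomial ℕ ℂ)
        = X 3 * (pderiv 0 A + pderiv 1 B + pderiv 2 C')
          + pderiv 0 F * A + pderiv 1 F * B + pderiv 2 F * C' := by
  have hkC : (2*(k:ℂ)+1) ≠ 0 := by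
    have h : ((2*k+1:ℕ):ℂ) ≠ 0 := Nat.cast_ne_zero.mpr (by omega)
    push_cast at h; exact h
  refine ⟨0, X 2 ^ (2*p+(2*k+1)), C (-(2/(2*(k:ℂ)+1))) * X 2 ^ (2*p+1), ?_⟩
  subst hF
  -- compute pderiv 1 F
  have pd1F : pderiv 1 (X 0 ^ 2 + X 1 ^ 2 + X 1 * X 2 ^ (2 * k + 1)
      + ∑ γ ∈ Finset.range (2 * k + 1), X (4 + γ) * X 2 ^ (2 * γ) : MvPolynomial ℕ ℂ)
      = 2 * X 1 + X 2 ^ (2*k+1) := by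
    rw [map_add, map_add, map_add, map_sum]
    rw [Finset.sum_eq_zero (fun γ _ => by
      rw [pderiv_mul, pderiv_X_of_ne (by omega), pderiv_pow, pderiv_X_of_ne (by omega)]; ring)]
    rw [pderiv_pow, pderiv_X_of_ne (by omega), pderiv_pow, pderiv_X_self,
      pderiv_mul, pderiv_X_self, pderiv_pow, pderiv_X_of_ne (by omega)]
    push_cast; ring
  -- compute pderiv 2 F
  have pd2F : pderiv 2 (X 0 ^ 2 + X 1 ^ 2 + X 1 * X 2 ^ (2 * k + 1)
      + ∑ γ ∈ Finset.range (2 * k + 1), X (4 + γ) * X 2 ^ (2 * γ) : MvPolynomial ℕ ℂ)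
      = ((2*k+1 : ℕ) : MvPolynomial ℕ ℂ) * X 1 * X 2 ^ (2*k)
        + ∑ γ ∈ Finset.range (2 * k + 1),
            ((2*γ : ℕ) : MvPolynomial ℕ ℂ) * X (4 + γ) * X 2 ^ (2*γ-1) := by
    rw [map_add, map_add, map_add, map_sum]
    rw [pderiv_pow, pderiv_X_of_ne (by omega), pderiv_pow, pderiv_X_of_ne (by omega),
      pderiv_mul, pderiv_X_of_ne (by omega), pderiv_pow, pderiv_X_self,
      show 2*k+1-1 = 2*k from by omega]
    congr 1
    · ring
    · exact Finset.sum_congr rfl fun γ _ => by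
        rw [pderiv_mul, pderiv_X_of_ne (by omega), pderiv_pow, pderiv_X_self]
        ring
  -- pderiv 1 B = 0
  have pd1B : pderiv 1 (X 2 ^ (2*p+(2*k+1)) : MvPolynomial ℕ ℂ) = 0 := by
    rw [pderiv_pow, pderiv_X_of_ne (by omega)]; ring
  -- pderiv 2 C'
  have pd2C : pderiv 2 (C (-(2/(2*(k:ℂ)+1))) * X 2 ^ (2*p+1) : MvPolynomial ℕ ℂ)
      = C (-(2/(2*(k:ℂ)+1))) * (((2*p+1:ℕ) : MvPolynomial ℕ ℂ) * X 2 ^ (2*p)) := by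
    rw [pderiv_C_mul, pderiv_pow, pderiv_X_self, show 2*p+1-1 = 2*p from by omega]; ring
  -- the key sum identity
  have hs : (∑ γ ∈ Finset.range (2 * k + 1),
        ((2*γ : ℕ) : MvPolynomial ℕ ℂ) * X (4 + γ) * X 2 ^ (2*γ-1))
        * (C (-(2/(2*(k:ℂ)+1))) * X 2 ^ (2*p+1))
      = -(C ((4 : ℂ) / (2 * (k : ℂ) + 1)) *
          ∑ γ ∈ Finset.range (2 * k + 1),
              C ((γ : ℂ)) * X (4 + γ) * X 2 ^ (2 * (γ + p))) := by
    rw [Finset.sum_mul, Finset.mul_sum, ← Finset.sum_neg_distrib]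
    refine Finset.sum_congr rfl fun γ _ => ?_
    match γ with
    | 0 => simp
    | n+1 =>
      rw [show 2*(n+1)-1 = 2*n+1 from by omega,
        show 2*(n+1+p) = (2*n+1)+(2*p+1) from by ring, pow_add,
        ← C_eq_coe_nat]
      have hc : (C ((2*(n+1):ℕ):ℂ) : MvPolynomial ℕ ℂ) * C (-(2/(2*(k:ℂ)+1)))
          = -(C ((4 : ℂ) / (2 * (k : ℂ) + 1)) * C (((n+1:ℕ):ℂ))) := by
        rw [← C_mul, ← C_mul, ← C_neg]
        congr 1; push_cast; ring
      linear_combination (X (4+(n+1)) * X 2 ^ (2*n+1) * X 2 ^ (2*p+1)) * hc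
  -- scalar identities
  have hA : (((2*k+1:ℕ)) : MvPolynomial ℕ ℂ) * C (-(2/(2*(k:ℂ)+1))) = -2 := by
    rw [← C_eq_coe_nat, ← C_mul]
    have : ((2*k+1:ℕ):ℂ) * (-(2/(2*(k:ℂ)+1))) = -2 := by push_cast; field_simp
    rw [this]; simp [map_neg, map_ofNat]
  have hB : C ((4 : ℂ) / (2 * (k : ℂ) + 1)) * C ((p : ℂ) + 1 / 2)
      = -(C (-(2/(2*(k:ℂ)+1))) * (((2*p+1:ℕ)) : MvPolynomial ℕ ℂ)) := by
    rw [← C_eq_coe_nat, ← C_mul, ← C_mul, ← C_neg]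
    congr 1; push_cast; ring
  rw [map_zero, mul_zero, pd1B, pd1F, pd2F, pd2C, add_mul, add_mul, hs,
    show 2*(α+β) = (2*p+(2*k+1))+(2*k+1) from by omega]
  linear_combination (-(X 3 * X 2 ^ (2*p))) * hB + (-(X 1 * X 2 ^ (2*k) * X 2 ^ (2*p+1))) * hA
end
end
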